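/- Let n ≥ 3 be an integer, H a real number, and φ a positive continuously differentiable function on an interval of radii. Along any solution (r, z, σ), defined on an open interval I, of the profile ODE system r'(s) = cos σ(s), z'(s) = sin σ(s), σ'(s) = (n−1)H − (n−2)(φ'(r(s))/φ(r(s))) sin σ(s) (with r(s) in the domain of φ for all s ∈ I), the function J(s) = φ(r(s))^{n−2} sin σ(s) − h(r(s)) is constant on I; that is, J is a first integral of the system. -/

import Mathlib

open Set Filter Real

/-- The function `h(x) = (n-1) H ∫₀ˣ φ(u)^(n-2) du` associated to the profile ODE system. -/
noncomputable def profileH (n : ℕ) (H : ℝ) (φ : ℝ → ℝ) (x : ℝ) : ℝ :=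
  ((n : ℝ) - 1) * H * (∫ u in (0:ℝ)..x, φ u ^ (n - 2))

/-- For an integer `n ≥ 3`, a real number `H`, and a positive continuously
differentiable function `φ` on an interval of radii `[0, b]`, along any solution `(r, z, σ)`
of the profile ODE system
`r' = cos σ`, `z' = sin σ`, `σ' = (n-1)H - (n-2)(φ'(r)/φ(r)) sin σ`
defined on an open interval `(s₁, s₂)` (with `r(s)` in the domain of `φ`), the quantity
`J(s) = φ(r(s))^(n-2) sin σ(s) - h(r(s))` is constant, where
`h(x) = (n-1) H ∫₀ˣ φ(u)^(n-2) du`; that is, `J` is a first integral of the system. -/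
theorem first_integral_of_profile_ODE
    (n : ℕ) (hn : 3 ≤ n) (H : ℝ) (b : ℝ) (hb : 0 < b)
    (φ φ' : ℝ → ℝ)
    (hφpos : ∀ x ∈ Icc (0:ℝ) b, 0 < φ x)
    (hφderiv : ∀ x ∈ Icc (0:ℝ) b, HasDerivWithinAt φ (φ' x) (Icc (0:ℝ) b) x)
    (hφ'cont : ContinuousOn φ' (Icc (0:ℝ) b))
    (r z σ : ℝ → ℝ) (s₁ s₂ : ℝ)
    (hmem : ∀ s ∈ Ioo s₁ s₂, r s ∈ Icc (0:ℝ) b)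
    (hr : ∀ s ∈ Ioo s₁ s₂, HasDerivAt r (Real.cos (σ s)) s)
    (hz : ∀ s ∈ Ioo s₁ s₂, HasDerivAt z (Real.sin (σ s)) s)
    (hσ : ∀ s ∈ Ioo s₁ s₂, HasDerivAt σ
      (((n : ℝ) - 1) * H - ((n : ℝ) - 2) * (φ' (r s) / φ (r s)) * Real.sin (σ s)) s) :
    ∀ s ∈ Ioo s₁ s₂, ∀ t ∈ Ioo s₁ s₂,
      φ (r s) ^ (n - 2) * Real.sin (σ s) - profileH n H φ (r s)
        = φ (r t) ^ (n - 2) * Real.sin (σ t) - profileH n H φ (r t) := by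
  set J : ℝ → ℝ := fun s => φ (r s) ^ (n - 2) * Real.sin (σ s) - profileH n H φ (r s) with hJ
  have hφcont : ContinuousOn φ (Icc (0:ℝ) b) :=
    fun x hx => (hφderiv x hx).continuousWithinAt
  have hfcont : ContinuousOn (fun u => φ u ^ (n - 2)) (Icc (0:ℝ) b) := hφcont.pow _
  -- key : J has derivative 0 at every point of Ioo s₁ s₂
  have key : ∀ u ∈ Ioo s₁ s₂, HasDerivAt J 0 u := by
    intro u hu
    have hru := hmem u hu
    have hφr : HasDerivAt (fun w => φ (r w)) (Real.cos (σ u) * φ' (r u)) u := by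
      have := ((hφderiv (r u) hru).scomp (h := r) u (hr u hu).hasDerivWithinAt
        (fun x hx => hmem x hx)).hasDerivAt (Ioo_mem_nhds hu.1 hu.2)
      simpa [smul_eq_mul, Function.comp_def] using this
    have hφrpow : HasDerivAt (fun w => φ (r w) ^ (n - 2))
        (((n : ℝ) - 2) * φ (r u) ^ (n - 3) * (Real.cos (σ u) * φ' (r u))) u := by
      have := hφr.pow (n - 2)
      have hcast : ((n - 2 : ℕ) : ℝ) = (n : ℝ) - 2 := by
        have : (2 : ℕ) ≤ n := by omega
        push_cast [Nat.cast_sub this]; ring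
      have hexp : n - 2 - 1 = n - 3 := by omega
      simpa [hcast, hexp, Pi.pow_def] using this
    have hsin : HasDerivAt (fun w => Real.sin (σ w))
        (Real.cos (σ u) *
          (((n : ℝ) - 1) * H - ((n : ℝ) - 2) * (φ' (r u) / φ (r u)) * Real.sin (σ u))) u := by
      simpa [mul_comm, Function.comp_def] using (Real.hasDerivAt_sin (σ u)).comp u (hσ u hu)
    -- derivative of the integral term
    haveI : Fact (r u ∈ Icc (0:ℝ) b) := ⟨hru⟩
    have hInt : IntervalIntegrable (fun u => φ u ^ (n - 2)) MeasureTheory.volume 0 (r u) := by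
      apply ContinuousOn.intervalIntegrable
      apply hfcont.mono
      rw [uIcc_of_le hru.1]
      exact Icc_subset_Icc le_rfl hru.2
    have hih : HasDerivWithinAt (fun x => ∫ v in (0:ℝ)..x, φ v ^ (n - 2))
        (φ (r u) ^ (n - 2)) (Icc (0:ℝ) b) (r u) :=
      intervalIntegral.integral_hasDerivWithinAt_right hInt
        (hfcont.stronglyMeasurableAtFilter_nhdsWithin measurableSet_Icc (r u))
        (hfcont (r u) hru)
    have hh : HasDerivAt (fun w => profileH n H φ (r w))
        (Real.cos (σ u) * (((n : ℝ) - 1) * H * φ (r u) ^ (n - 2))) u := by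
      have hcomp := (hih.scomp (h := r) u (hr u hu).hasDerivWithinAt
        (fun x hx => hmem x hx)).hasDerivAt (Ioo_mem_nhds hu.1 hu.2)
      have := hcomp.const_mul (((n : ℝ) - 1) * H)
      simp only [profileH]
      convert this using 1
      · rfl
      · rfl
      · rfl
      · rw [smul_eq_mul]; ring
    have hJder : HasDerivAt J
        (((n : ℝ) - 2) * φ (r u) ^ (n - 3) * (Real.cos (σ u) * φ' (r u)) * Real.sin (σ u)
          + φ (r u) ^ (n - 2) *
            (Real.cos (σ u) *
              (((n : ℝ) - 1) * H - ((n : ℝ) - 2) * (φ' (r u) / φ (r u)) * Real.sin (σ u)))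
          - Real.cos (σ u) * (((n : ℝ) - 1) * H * φ (r u) ^ (n - 2))) u :=
      ((hφrpow.mul hsin).sub hh)
    convert hJder using 1
    have hφpos' := hφpos (r u) hru
    have hpow : φ (r u) ^ (n - 2) = φ (r u) ^ (n - 3) * φ (r u) := by
      rw [← pow_succ]; congr 1; omega
    rw [hpow]
    field_simp
    ring
  -- constancy
  have main : ∀ s ∈ Ioo s₁ s₂, ∀ t ∈ Ioo s₁ s₂, s ≤ t → J s = J t := by
    intro s hs t ht hst
    have hsub : Icc s t ⊆ Ioo s₁ s₂ := fun x hx => ⟨lt_of_lt_of_le hs.1 hx.1, lt_of_le_of_lt hx.2 ht.2⟩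
    have := constant_of_has_deriv_right_zero (f := J) (a := s) (b := t)
      (fun x hx => (key x (hsub hx)).continuousAt.continuousWithinAt)
      (fun x hx => ((key x (hsub ⟨hx.1, hx.2.le⟩)).hasDerivWithinAt))
    exact (this t ⟨hst, le_rfl⟩).symm
  intro s hs t ht
  rcases le_total s t with h | h
  · exact main s hs t ht h
  · exact (main t ht s hs h).symm
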